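/- In the noisy-pair model with class transition matrix T (size c×c), suppose c ≥ 8, every diagonal entry satisfies T_{ii} > 1/2, and T is not the identity matrix (so the class noise rate ρ_c := 1 − (1/c)·Σ_i T_{ii} is strictly positive). Then the similarity noise rate is strictly lower than the class noise rate: P(H̄ ≠ H) < ρ_c. -/

import Mathlib

/- The probability of an event `A` (on quadruples `(i₁, j₁, i₂, j₂)` of clean/noisy class
labels for two independent points) in the noisy-pair model with class transition matrix `T`
and uniform class priors: each quadruple has probability `(1/c²) · T i₁ j₁ · T i₂ j₂`. -/
open Classical in
noncomputable def noisyPairProb (c : ℕ) (T : Matrix (Fin c) (Fin c) ℝ)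
    (A : Fin c → Fin c → Fin c → Fin c → Prop) : ℝ :=
  ∑ i₁ : Fin c, ∑ j₁ : Fin c, ∑ i₂ : Fin c, ∑ j₂ : Fin c,
    if A i₁ j₁ i₂ j₂ then (1 / (c : ℝ) ^ 2) * T i₁ j₁ * T i₂ j₂ else 0

/-- If `c ≥ 8`, every diagonal entry of `T` exceeds `1/2`, and `T` is not the identity
matrix (so the class noise rate `ρ_c = 1 − (1/c)·Σ_i T_{ii}` is positive), then the
similarity noise rate `P(H̄ ≠ H)` is strictly lower than the class noise rate. -/
theorem simiNoise_lt_classNoise (c : ℕ) (hc : 8 ≤ c) (T : Matrix (Fin c) (Fin c) ℝ)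
    (hpos : ∀ i j, 0 ≤ T i j) (hrow : ∀ i, ∑ j, T i j = 1)
    (hdiag : ∀ i, 1 / 2 < T i i) (hne : T ≠ 1) :
    noisyPairProb c T (fun i₁ j₁ i₂ j₂ => ¬ ((i₁ = i₂) ↔ (j₁ = j₂))) <
      1 - (1 / (c : ℝ)) * ∑ i, T i i := by
  classical
  have hn8 : (8:ℝ) ≤ (c:ℝ) := by exact_mod_cast hc
  have hn : (0:ℝ) < (c:ℝ) := by linarith
  set ε : Fin c → ℝ := fun i => 1 - T i i with hεdef
  have hT1 : ∀ i j, T i j ≤ 1 := by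
    intro i j
    rw [← hrow i]
    exact Finset.single_le_sum (fun k _ => hpos i k) (Finset.mem_univ j)
  have herow : ∀ i, ∑ j ∈ Finset.univ.erase i, T i j = ε i := by
    intro i
    have := Finset.add_sum_erase Finset.univ (T i) (Finset.mem_univ i)
    rw [hrow i] at this
    simp only [hεdef]; linarith
  have he0 : ∀ i, 0 ≤ ε i := fun i => by
    have := hT1 i i; simp only [hεdef]; linarith
  have hehalf : ∀ i, ε i < 1/2 := fun i => by
    have := hdiag i; simp only [hεdef]; linarith
  have hTle : ∀ i j, j ≠ i → T i j ≤ ε i := by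
    intro i j hj
    rw [← herow i]
    exact Finset.single_le_sum (fun k _ => hpos i k)
      (Finset.mem_erase.mpr ⟨hj, Finset.mem_univ j⟩)
  set S : ℝ := ∑ i, ε i with hSdef
  have hS0 : 0 < S := by
    rcases lt_or_eq_of_le (Finset.sum_nonneg (fun i _ => he0 i)) with h | h
    · exact h
    · exfalso; apply hne
      have hz : ∀ i ∈ Finset.univ, ε i = 0 :=
        (Finset.sum_eq_zero_iff_of_nonneg (fun i _ => he0 i)).mp h.symm
      ext i j
      by_cases hij : i = j
      · subst hij
        have := hz i (Finset.mem_univ i)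
        simp only [hεdef] at this
        simp [Matrix.one_apply]; linarith
      · have h1 : T i j ≤ ε i := hTle i j (Ne.symm hij)
        have := hz i (Finset.mem_univ i)
        have := hpos i j
        simp [Matrix.one_apply, hij]; linarith
  have hShalf : S < (c:ℝ) / 2 := by
    have : S < ∑ _i : Fin c, (1:ℝ)/2 :=
      Finset.sum_lt_sum_of_nonempty
        (Finset.univ_nonempty_iff.mpr ⟨⟨0, by omega⟩⟩) (fun i _ => hehalf i)
    simpa [Finset.card_univ, mul_comm] using this.trans_le (le_of_eq (by
      rw [Finset.sum_const, Finset.card_univ, Fintype.card_fin]; ring))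
  -- factor the constant out
  have factor : noisyPairProb c T (fun i₁ j₁ i₂ j₂ => ¬ ((i₁ = i₂) ↔ (j₁ = j₂))) =
      (1 / (c:ℝ)^2) * ∑ i₁ : Fin c, ∑ j₁ : Fin c, ∑ i₂ : Fin c, ∑ j₂ : Fin c,
        (if ¬ ((i₁ = i₂) ↔ (j₁ = j₂)) then T i₁ j₁ * T i₂ j₂ else 0) := by
    simp only [noisyPairProb, Finset.mul_sum, mul_ite, mul_zero, mul_assoc]
  -- pointwise split of the indicator
  have hpt : ∀ i₁ j₁ i₂ j₂ : Fin c,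
      (if ¬ ((i₁ = i₂) ↔ (j₁ = j₂)) then T i₁ j₁ * T i₂ j₂ else 0) =
      (if i₁ = i₂ ∧ ¬ j₁ = j₂ then T i₁ j₁ * T i₂ j₂ else 0) +
      (if ¬ i₁ = i₂ ∧ j₁ = j₂ then T i₁ j₁ * T i₂ j₂ else 0) := by
    intro i₁ j₁ i₂ j₂
    by_cases h1 : i₁ = i₂ <;> by_cases h2 : j₁ = j₂ <;> simp [h1, h2]
  have hsplit : (∑ i₁ : Fin c, ∑ j₁ : Fin c, ∑ i₂ : Fin c, ∑ j₂ : Fin c,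
        (if ¬ ((i₁ = i₂) ↔ (j₁ = j₂)) then T i₁ j₁ * T i₂ j₂ else 0)) =
      (∑ i₁ : Fin c, ∑ j₁ : Fin c, ∑ i₂ : Fin c, ∑ j₂ : Fin c,
        (if i₁ = i₂ ∧ ¬ j₁ = j₂ then T i₁ j₁ * T i₂ j₂ else 0)) +
      (∑ i₁ : Fin c, ∑ j₁ : Fin c, ∑ i₂ : Fin c, ∑ j₂ : Fin c,
        (if ¬ i₁ = i₂ ∧ j₁ = j₂ then T i₁ j₁ * T i₂ j₂ else 0)) := by
    simp only [hpt, Finset.sum_add_distrib]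
  -- evaluate Sum A
  have eA : (∑ i₁ : Fin c, ∑ j₁ : Fin c, ∑ i₂ : Fin c, ∑ j₂ : Fin c,
        (if i₁ = i₂ ∧ ¬ j₁ = j₂ then T i₁ j₁ * T i₂ j₂ else 0)) =
      ∑ i : Fin c, ∑ j₁ : Fin c, T i j₁ * (1 - T i j₁) := by
    refine Finset.sum_congr rfl fun i _ => Finset.sum_congr rfl fun j₁ _ => ?_
    rw [Finset.sum_comm]
    calc (∑ j₂ : Fin c, ∑ i₂ : Fin c,
        (if i = i₂ ∧ ¬ j₁ = j₂ then T i j₁ * T i₂ j₂ else 0))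
        = ∑ j₂ : Fin c, (if ¬ j₁ = j₂ then T i j₁ * T i j₂ else 0) := by
          refine Finset.sum_congr rfl fun j₂ _ => ?_
          by_cases h : j₁ = j₂ <;> simp [h, Finset.sum_ite_eq]
      _ = T i j₁ * ∑ j₂ ∈ Finset.univ.erase j₁, T i j₂ := by
          rw [← Finset.sum_filter, Finset.filter_ne, Finset.mul_sum]
      _ = T i j₁ * (1 - T i j₁) := by
          have := Finset.add_sum_erase Finset.univ (T i) (Finset.mem_univ j₁)
          rw [hrow i] at this
          rw [show (∑ j₂ ∈ Finset.univ.erase j₁, T i j₂) = 1 - T i j₁ by linarith]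
  have hA : (∑ i : Fin c, ∑ j₁ : Fin c, T i j₁ * (1 - T i j₁)) ≤ 2 * S := by
    rw [hSdef, Finset.mul_sum]
    refine Finset.sum_le_sum fun i _ => ?_
    rw [← Finset.add_sum_erase Finset.univ (fun j₁ => T i j₁ * (1 - T i j₁)) (Finset.mem_univ i)]
    have h1 : T i i * (1 - T i i) ≤ ε i := by
      have := hT1 i i; have := he0 i
      simp only [hεdef] at *; nlinarith
    have h2 : ∑ j₁ ∈ Finset.univ.erase i, T i j₁ * (1 - T i j₁) ≤ ε i := by
      rw [← herow i]
      refine Finset.sum_le_sum fun j hj => ?_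
      have := hpos i j; have := hT1 i j
      nlinarith
    linarith
  -- evaluate Sum B
  have eB : (∑ i₁ : Fin c, ∑ j₁ : Fin c, ∑ i₂ : Fin c, ∑ j₂ : Fin c,
        (if ¬ i₁ = i₂ ∧ j₁ = j₂ then T i₁ j₁ * T i₂ j₂ else 0)) =
      ∑ i₁ : Fin c, ∑ i₂ : Fin c,
        (if ¬ i₁ = i₂ then (∑ j : Fin c, T i₁ j * T i₂ j) else 0) := by
    refine Finset.sum_congr rfl fun i₁ _ => ?_
    rw [Finset.sum_comm]
    refine Finset.sum_congr rfl fun i₂ _ => ?_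
    by_cases h : i₁ = i₂
    · simp [h]
    · simp only [h, not_false_iff, true_and, if_true]
      rw [Finset.sum_comm]
      refine Finset.sum_congr rfl fun j _ => ?_
      simp [Finset.sum_ite_eq]
  have hpair : ∀ i₁ i₂ : Fin c, i₁ ≠ i₂ →
      (∑ j : Fin c, T i₁ j * T i₂ j) ≤ T i₁ i₂ + T i₂ i₁ + ε i₁ * ε i₂ := by
    intro i₁ i₂ h12
    rw [← Finset.add_sum_erase Finset.univ (fun j => T i₁ j * T i₂ j) (Finset.mem_univ i₁)]
    have hi2 : i₂ ∈ Finset.univ.erase i₁ :=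
      Finset.mem_erase.mpr ⟨Ne.symm h12, Finset.mem_univ i₂⟩
    rw [← Finset.add_sum_erase _ (fun j => T i₁ j * T i₂ j) hi2]
    have b1 : T i₁ i₁ * T i₂ i₁ ≤ T i₂ i₁ := by
      have := hT1 i₁ i₁; have := hpos i₂ i₁; nlinarith
    have b2 : T i₁ i₂ * T i₂ i₂ ≤ T i₁ i₂ := by
      have := hT1 i₂ i₂; have := hpos i₁ i₂; nlinarith
    have b3 : ∑ j ∈ (Finset.univ.erase i₁).erase i₂, T i₁ j * T i₂ j ≤ ε i₁ * ε i₂ := by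
      have step1 : ∑ j ∈ (Finset.univ.erase i₁).erase i₂, T i₁ j * T i₂ j ≤
          ∑ j ∈ (Finset.univ.erase i₁).erase i₂, T i₁ j * ε i₂ := by
        refine Finset.sum_le_sum fun j hj => ?_
        have hj2 : j ≠ i₂ := (Finset.mem_erase.mp hj).1
        exact mul_le_mul_of_nonneg_left (hTle i₂ j hj2) (hpos i₁ j)
      have step2 : ∑ j ∈ (Finset.univ.erase i₁).erase i₂, T i₁ j ≤ ε i₁ := by
        rw [← herow i₁]
        exact Finset.sum_le_sum_of_subset_of_nonneg (Finset.erase_subset _ _)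
          (fun j _ _ => hpos i₁ j)
      calc ∑ j ∈ (Finset.univ.erase i₁).erase i₂, T i₁ j * T i₂ j
          ≤ ∑ j ∈ (Finset.univ.erase i₁).erase i₂, T i₁ j * ε i₂ := step1
        _ = (∑ j ∈ (Finset.univ.erase i₁).erase i₂, T i₁ j) * ε i₂ := by
            rw [Finset.sum_mul]
        _ ≤ ε i₁ * ε i₂ := mul_le_mul_of_nonneg_right step2 (he0 i₂)
    linarith
  have hB : (∑ i₁ : Fin c, ∑ i₂ : Fin c,
        (if ¬ i₁ = i₂ then (∑ j : Fin c, T i₁ j * T i₂ j) else 0)) ≤ 2 * S + S * S := by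
    have e1 : (∑ i₁ : Fin c, ∑ i₂ : Fin c, (if ¬ i₁ = i₂ then T i₁ i₂ else 0)) = S := by
      rw [hSdef]
      refine Finset.sum_congr rfl fun i₁ _ => ?_
      rw [← Finset.sum_filter, Finset.filter_ne, herow]
    have e2 : (∑ i₁ : Fin c, ∑ i₂ : Fin c, (if ¬ i₁ = i₂ then T i₂ i₁ else 0)) = S := by
      rw [Finset.sum_comm, hSdef]
      refine Finset.sum_congr rfl fun i₂ _ => ?_
      calc (∑ i₁ : Fin c, (if ¬ i₁ = i₂ then T i₂ i₁ else 0))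
          = ∑ i₁ ∈ Finset.univ.filter (fun i₁ => ¬ i₁ = i₂), T i₂ i₁ := by
            rw [Finset.sum_filter]
        _ = ∑ i₁ ∈ Finset.univ.erase i₂, T i₂ i₁ := by
            congr 1
            ext x
            simp [Finset.mem_erase]
        _ = ε i₂ := herow i₂
    have e3 : (∑ i₁ : Fin c, ∑ i₂ : Fin c, ε i₁ * ε i₂) = S * S := by
      rw [hSdef, Finset.sum_mul]
      refine Finset.sum_congr rfl fun i₁ _ => ?_
      rw [Finset.mul_sum]
    have step1 : (∑ i₁ : Fin c, ∑ i₂ : Fin c,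
          (if ¬ i₁ = i₂ then (∑ j : Fin c, T i₁ j * T i₂ j) else 0)) ≤
        ∑ i₁ : Fin c, ∑ i₂ : Fin c,
          ((if ¬ i₁ = i₂ then T i₁ i₂ else 0) +
           (if ¬ i₁ = i₂ then T i₂ i₁ else 0) + ε i₁ * ε i₂) := by
      refine Finset.sum_le_sum fun i₁ _ => Finset.sum_le_sum fun i₂ _ => ?_
      by_cases h : i₁ = i₂
      · simp [h]; nlinarith [he0 i₁, he0 i₂]
      · simp only [h, not_false_iff, if_true]
        have := hpair i₁ i₂ h
        linarith
    calc (∑ i₁ : Fin c, ∑ i₂ : Fin c,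
          (if ¬ i₁ = i₂ then (∑ j : Fin c, T i₁ j * T i₂ j) else 0))
        ≤ ∑ i₁ : Fin c, ∑ i₂ : Fin c,
          ((if ¬ i₁ = i₂ then T i₁ i₂ else 0) +
           (if ¬ i₁ = i₂ then T i₂ i₁ else 0) + ε i₁ * ε i₂) := step1
      _ = (∑ i₁ : Fin c, ∑ i₂ : Fin c, (if ¬ i₁ = i₂ then T i₁ i₂ else 0)) +
          (∑ i₁ : Fin c, ∑ i₂ : Fin c, (if ¬ i₁ = i₂ then T i₂ i₁ else 0)) +
          (∑ i₁ : Fin c, ∑ i₂ : Fin c, ε i₁ * ε i₂) := by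
          simp only [Finset.sum_add_distrib]
      _ ≤ 2 * S + S * S := by rw [e1, e2, e3]; linarith
  -- final assembly
  have hSeq : S = (c:ℝ) - ∑ i, T i i := by
    rw [hSdef]
    simp only [hεdef]
    rw [Finset.sum_sub_distrib, Finset.sum_const, Finset.card_univ, Fintype.card_fin]
    ring
  rw [factor, hsplit, eA, eB]
  have hsum : (∑ i : Fin c, ∑ j₁ : Fin c, T i j₁ * (1 - T i j₁)) +
      (∑ i₁ : Fin c, ∑ i₂ : Fin c,
        (if ¬ i₁ = i₂ then (∑ j : Fin c, T i₁ j * T i₂ j) else 0)) ≤ 4 * S + S * S := by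
    linarith
  have h4 : 4 + S < (c:ℝ) := by linarith
  have hlt : 4 * S + S * S < (c:ℝ) * S := by nlinarith [mul_lt_mul_of_pos_left h4 hS0]
  calc (1 / (c:ℝ)^2) * ((∑ i : Fin c, ∑ j₁ : Fin c, T i j₁ * (1 - T i j₁)) +
        (∑ i₁ : Fin c, ∑ i₂ : Fin c,
          (if ¬ i₁ = i₂ then (∑ j : Fin c, T i₁ j * T i₂ j) else 0)))
      ≤ (1 / (c:ℝ)^2) * (4 * S + S * S) := by
        apply mul_le_mul_of_nonneg_left hsum; positivity
    _ < (1 / (c:ℝ)^2) * ((c:ℝ) * S) := by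
        apply mul_lt_mul_of_pos_left hlt; positivity
    _ = S / (c:ℝ) := by field_simp
    _ = 1 - (1 / (c:ℝ)) * ∑ i, T i i := by
        rw [hSeq]; field_simp
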